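/- arXiv:1801.07140 — 2 statements merged into one kernel-verified Lean document; each statement's English description precedes it below -/
import Mathlib

section
/- Let p ∈ (0,1), λ = 2(1-p)/(2-p), and i > 2 an integer. If h_i satisfies h_i (1-(1-p)^i) = i p^{i-1}(1-p) + (1 - p^i - (1-p)^i - i p^{i-1}(1-p)) λ, then h_i ≥ λ. -/
theorem inductive_step_hitting (p : ℝ) (hp : p ∈ Set.Ioo (0:ℝ) 1) (i : ℕ) (hi : i > 2)
    (lam : ℝ) (hlam : lam = 2 * (1 - p) / (2 - p)) (h : ℝ)
    (hrec : h * (1 - (1 - p) ^ i) =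
      (i : ℝ) * p ^ (i - 1) * (1 - p) +
        (1 - p ^ i - (1 - p) ^ i - (i : ℝ) * p ^ (i - 1) * (1 - p)) * lam) :
    h ≥ lam := by
  obtain ⟨hp0, hp1⟩ := hp
  have h2p : (2 : ℝ) - p > 0 := by linarith
  have hq0 : (0:ℝ) < 1 - p := by linarith
  have hpow : (1 - p) ^ i < 1 := by
    apply pow_lt_one₀ (by linarith) (by linarith) (by omega)
  have hD : (0:ℝ) < 1 - (1 - p) ^ i := by linarith
  have hpi : p ^ i = p ^ (i - 1) * p := by
    rw [← pow_succ]
    congr 1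
    omega
  have hppos : (0:ℝ) < p ^ (i - 1) := pow_pos hp0 _
  have hi2 : (2:ℝ) < (i:ℝ) := by exact_mod_cast hi
  have key : (h - lam) * ((1 - (1 - p) ^ i) * (2 - p)) =
      p ^ (i - 1) * p * (1 - p) * ((i:ℝ) - 2) := by
    rw [hpi] at hrec
    have hlam' : lam * (2 - p) = 2 * (1 - p) := by
      rw [hlam]; field_simp
    linear_combination (2 - p) * hrec +
      ((1 - p ^ (i - 1) * p - (1 - p) ^ i - (i:ℝ) * p ^ (i - 1) * (1 - p)) - (1 - (1 - p) ^ i)) * hlam'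
  nlinarith [key, mul_pos hD h2p, mul_pos (mul_pos (mul_pos hppos hp0) hq0) (by linarith : (0:ℝ) < (i:ℝ) - 2)]
end

section
/- For every p ∈ (0,1) and every integer i ≥ 1, the hitting probability h_i of the absorbing state {1} in the binomial decay Markov chain (transitions Pr(j|i) = C(i,j)p^{i-j}(1-p)^j for i>1, states 0 and 1 absorbing) satisfies h_i ≥ 2(1-p)/(2-p), and this bound is tight since h_2 = 2(1-p)/(2-p). -/
theorem hitting_prob_lower_bound (p : ℝ) (hp : p ∈ Set.Ioo (0:ℝ) 1)
    (h : ℕ → ℝ) (h0 : h 0 = 0) (h1 : h 1 = 1)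
    (hrec : ∀ i, 2 ≤ i →
      h i = ∑ j ∈ Finset.range (i + 1),
        (i.choose j : ℝ) * p ^ (i - j) * (1 - p) ^ j * h j) :
    (∀ i, 1 ≤ i → h i ≥ 2 * (1 - p) / (2 - p)) ∧ h 2 = 2 * (1 - p) / (2 - p) := by
  obtain ⟨hp0, hp1⟩ := hp
  have h2p : (0:ℝ) < 2 - p := by linarith
  have hq0 : (0:ℝ) < 1 - p := by linarith
  have hB1 : 2 * (1 - p) / (2 - p) ≤ 1 := by
    rw [div_le_one h2p]; linarith
  have hh2 : h 2 = 2 * (1 - p) / (2 - p) := by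
    have e := hrec 2 le_rfl
    simp [Finset.sum_range_succ, h0, h1] at e
    rw [eq_div_iff (ne_of_gt h2p)]
    have e2 : p * (h 2 * (2 - p)) = p * (2 * (1 - p)) := by linear_combination e
    exact mul_left_cancel₀ (ne_of_gt hp0) e2
  refine ⟨?_, hh2⟩
  intro i
  induction i using Nat.strong_induction_on with
  | _ i IH =>
    intro hi1
    rcases eq_or_lt_of_le hi1 with h1i | h2i
    · rw [← h1i, h1]; linarith
    · have hi2 : 2 ≤ i := h2i
      set q := 1 - p with hq
      set c : ℕ → ℝ := fun j => (i.choose j : ℝ) * p ^ (i - j) * q ^ j with hc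
      have hsum1 : ∑ j ∈ Finset.range (i + 1), c j = 1 := by
        have e := add_pow q p i
        have hqp : q + p = 1 := by rw [hq]; ring
        rw [hqp, one_pow] at e
        calc ∑ j ∈ Finset.range (i + 1), c j
            = ∑ j ∈ Finset.range (i + 1), q ^ j * p ^ (i - j) * (i.choose j : ℝ) := by
              apply Finset.sum_congr rfl; intro j _; simp only [hc]; ring
          _ = 1 := e.symm
      have hsplit : ∀ f : ℕ → ℝ, ∑ j ∈ Finset.range (i + 1), f j
          = f 0 + f 1 + (∑ j ∈ Finset.Ico 2 i, f j) + f i := by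
        intro f
        rw [Finset.sum_range_succ]
        rw [Finset.range_eq_Ico,
          ← Finset.sum_Ico_consecutive f (by norm_num : 0 ≤ 2) hi2]
        have : Finset.Ico 0 2 = ({0, 1} : Finset ℕ) := rfl
        rw [this]
        simp
      have e := hrec i hi2
      rw [hsplit] at e
      rw [h0, h1] at e
      simp only [Nat.choose_zero_right, Nat.choose_one_right, Nat.choose_self,
        Nat.sub_zero, Nat.sub_self, pow_zero, pow_one, Nat.cast_one, one_mul,
        mul_zero, mul_one, zero_add] at e
      -- e : h i = i * p^(i-1) * q + ∑_{Ico 2 i} c j * h j + q^i * h i  (roughly)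
      have hc0 : c 0 = p ^ i := by simp [hc]
      have hc1 : c 1 = (i : ℝ) * p ^ (i - 1) * q := by simp [hc]
      have hci : c i = q ^ i := by simp [hc]
      have hSsum : ∑ j ∈ Finset.Ico 2 i, c j = 1 - p ^ i - (i : ℝ) * p ^ (i - 1) * q - q ^ i := by
        have := hsplit c
        rw [hsum1, hc0, hc1, hci] at this
        linarith
      have hSB : ∑ j ∈ Finset.Ico 2 i, c j * h j
          ≥ ∑ j ∈ Finset.Ico 2 i, c j * (2 * q / (2 - p)) := by
        apply Finset.sum_le_sum
        intro j hj
        rw [Finset.mem_Ico] at hj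
        have hcj : 0 ≤ c j := by
          have hqn : (0:ℝ) ≤ q := le_of_lt hq0
          simp only [hc]
          positivity
        exact mul_le_mul_of_nonneg_left (IH j hj.2 (le_trans one_le_two hj.1)) hcj
      rw [← Finset.sum_mul, hSsum] at hSB
      have hi2r : (2:ℝ) ≤ (i:ℝ) := by exact_mod_cast hi2
      have hpa : (0:ℝ) < p ^ (i - 1) := pow_pos hp0 _
      have hpi : p ^ i = p * p ^ (i - 1) := by
        rw [← pow_succ']
        congr 1
        omega
      set B := 2 * q / (2 - p) with hBdef
      set c1 := (i : ℝ) * p ^ (i - 1) * q with hc1def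
      have side : c1 * (1 - B) - p ^ i * B ≥ 0 := by
        have expand : c1 * (1 - B) - p ^ i * B
            = (((i:ℝ) - 2) * p ^ (i - 1) * q * p) / (2 - p) := by
          rw [hBdef, hc1def, hpi]
          field_simp
          ring
        rw [expand]
        apply div_nonneg _ (le_of_lt h2p)
        have : (0:ℝ) ≤ (i:ℝ) - 2 := by linarith
        positivity
      have key : h i * (1 - q ^ i) ≥ B * (1 - q ^ i) := by
        nlinarith [e, hSB, side]
      have hqi1 : q ^ i < 1 := pow_lt_one₀ (le_of_lt hq0) (by linarith) (by omega)
      have hpos : (0:ℝ) < 1 - q ^ i := by linarith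
      rw [ge_iff_le, ← mul_le_mul_iff_of_pos_right hpos]
      exact key
end
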